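/- arXiv:1301.4666 — 9 statements merged into one kernel-verified Lean document; each statement's English description precedes it below -/
import Mathlib

section
/- If f is β-smooth and convex on a convex compact set P with diameter D, x* minimizes f on P, x_{t+1} = x_t + α(p_t - x_t) with α ∈ (0,1), where p_t ∈ P satisfies p_tᵀ∇f(x_t) ≤ x*ᵀ∇f(x_t) and ‖x_t - p_t‖ ≤ min(ρr_t, D), and ‖x_t - x*‖ ≤ r_t, then f(x_{t+1}) - f(x*) ≤ (1-α)(f(x_t) - f(x*)) + βα² min(ρ²r_t², D²). -/
open scoped RealInnerProductSpace

/-- One-step progress bound for the conditional gradient update with a local linear oracle: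
if `f` is `β`-smooth and convex on `P`, `xs` minimizes `f` on `P`,
`p` satisfies `⟪g x, p⟫ ≤ ⟪g x, xs⟫` and `‖x - p‖ ≤ min (ρ * r) D`, `‖x - xs‖ ≤ r`, and
`x' = x + α • (p - x)`, then
`f x' - f xs ≤ (1 - α) * (f x - f xs) + β * α ^ 2 * min (ρ ^ 2 * r ^ 2) (D ^ 2)`. -/
theorem stmt_1 {n : ℕ} (P : Set (EuclideanSpace ℝ (Fin n))) (hP : Convex ℝ P)
    (hPc : IsCompact P)
    (f : EuclideanSpace ℝ (Fin n) → ℝ) (g : EuclideanSpace ℝ (Fin n) → EuclideanSpace ℝ (Fin n))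
    (β D ρ r α : ℝ) (hβ : 0 < β) (hρ : 0 < ρ) (hr : 0 < r) (hα : α ∈ Set.Ioo (0:ℝ) 1)
    (hD : ∀ a ∈ P, ∀ b ∈ P, ‖a - b‖ ≤ D)
    (hsmooth : ∀ x ∈ P, ∀ y ∈ P, f y ≤ f x + ⟪g x, y - x⟫ + β * ‖x - y‖ ^ 2)
    (hconvex : ∀ x ∈ P, ∀ y ∈ P, f y ≥ f x + ⟪g x, y - x⟫)
    (xs : EuclideanSpace ℝ (Fin n)) (hxs : xs ∈ P) (hmin : ∀ y ∈ P, f xs ≤ f y)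
    (x p x' : EuclideanSpace ℝ (Fin n)) (hx : x ∈ P) (hp : p ∈ P)
    (hnear : ‖x - xs‖ ≤ r)
    (hporacle : ⟪g x, p⟫ ≤ ⟪g x, xs⟫)
    (hpdist : ‖x - p‖ ≤ min (ρ * r) D)
    (hupd : x' = x + α • (p - x)) :
    f x' - f xs ≤ (1 - α) * (f x - f xs) + β * α ^ 2 * min (ρ ^ 2 * r ^ 2) (D ^ 2) := by
  obtain ⟨hα0, hα1⟩ := hα
  have hx'P : x' ∈ P := by
    rw [hupd]
    have := hP hx hp (by linarith : (0:ℝ) ≤ 1 - α) hα0.le (by ring)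
    convert this using 1
    module
  have h1 : f x' ≤ f x + ⟪g x, x' - x⟫ + β * ‖x - x'‖ ^ 2 := hsmooth x hx x' hx'P
  have hdiff : x' - x = α • (p - x) := by rw [hupd]; abel
  have h2 : ⟪g x, x' - x⟫ = α * ⟪g x, p - x⟫ := by rw [hdiff, real_inner_smul_right]
  have h3 : ⟪g x, p - x⟫ ≤ ⟪g x, xs - x⟫ := by
    rw [inner_sub_right, inner_sub_right]; linarith
  have h4 : f x + ⟪g x, xs - x⟫ ≤ f xs := hconvex x hx xs hxs
  have hnorm : ‖x - x'‖ = α * ‖x - p‖ := by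
    have hh : x - x' = α • (x - p) := by rw [hupd]; module
    rw [hh, norm_smul, Real.norm_eq_abs, abs_of_pos hα0]
  have hnp : ‖x - p‖ ^ 2 ≤ min (ρ ^ 2 * r ^ 2) (D ^ 2) := by
    have hnn : (0:ℝ) ≤ ‖x - p‖ := norm_nonneg _
    refine le_min ?_ ?_
    · have : ‖x - p‖ ≤ ρ * r := hpdist.trans (min_le_left _ _)
      nlinarith
    · have : ‖x - p‖ ≤ D := hpdist.trans (min_le_right _ _)
      nlinarith
  have h5 : β * ‖x - x'‖ ^ 2 ≤ β * α ^ 2 * min (ρ ^ 2 * r ^ 2) (D ^ 2) := by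
    rw [hnorm, mul_pow]
    have := mul_le_mul_of_nonneg_left hnp (by positivity : (0:ℝ) ≤ β * α ^ 2)
    nlinarith
  have h6 : ⟪g x, x' - x⟫ ≤ α * (f xs - f x) := by
    rw [h2]
    have := mul_le_mul_of_nonneg_left h3 hα0.le
    nlinarith
  linarith
end

section
/- Let h_t ≥ 0 satisfy h_1 ≤ C and h_{t+1} ≤ (1-α)h_t + (α²βρ²/σ)·C·e^{-σ(t-1)/(4βρ²)} whenever h_t ≤ C·e^{-σ(t-1)/(4βρ²)}, where α = σ/(2βρ²) with σ ≤ 2βρ² (so α ∈ (0,1]). Then for all t ≥ 1, h_t ≤ C·e^{-σ(t-1)/(4βρ²)}. -/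
open Real

/-- The recurrence underlying linear convergence of the conditional gradient algorithm with a
local linear oracle: if `h 1 ≤ C`, `h` is nonnegative, `α = σ/(2βρ²)` with `σ ≤ 2βρ²`, and
whenever `h t ≤ C * exp (-σ(t-1)/(4βρ²))` we have
`h (t+1) ≤ (1-α) * h t + (α²βρ²/σ) * C * exp (-σ(t-1)/(4βρ²))`, then
`h t ≤ C * exp (-σ(t-1)/(4βρ²))` for all `t ≥ 1`. -/
theorem stmt_2 (β σ ρ C α : ℝ) (hβ : 0 < β) (hσ : 0 < σ) (hρ : 0 < ρ) (hC : 0 < C)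
    (hσβ : σ ≤ 2 * β * ρ ^ 2) (hα : α = σ / (2 * β * ρ ^ 2))
    (h : ℕ → ℝ) (hnonneg : ∀ t, 0 ≤ h t) (h1 : h 1 ≤ C)
    (hrec : ∀ t : ℕ, 1 ≤ t →
      h t ≤ C * exp (-(σ * ((t : ℝ) - 1)) / (4 * β * ρ ^ 2)) →
      h (t + 1) ≤ (1 - α) * h t +
        (α ^ 2 * β * ρ ^ 2 / σ) * C * exp (-(σ * ((t : ℝ) - 1)) / (4 * β * ρ ^ 2))) :
    ∀ t : ℕ, 1 ≤ t → h t ≤ C * exp (-(σ * ((t : ℝ) - 1)) / (4 * β * ρ ^ 2)) := by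
  have hD : 0 < 2 * β * ρ ^ 2 := by positivity
  have hαpos : 0 < α := by rw [hα]; positivity
  have hα1 : α ≤ 1 := by rw [hα]; exact div_le_one_of_le₀ hσβ hD.le
  have hαval : α ^ 2 * β * ρ ^ 2 / σ = α / 2 := by
    rw [hα]; field_simp
  intro t ht
  induction t with
  | zero => omega
  | succ n ih =>
    rcases Nat.eq_or_lt_of_le ht with heq | hlt
    · simp only [← heq]
      have : (-(σ * ((1:ℕ) - 1 : ℝ)) / (4 * β * ρ ^ 2)) = 0 := by norm_num
      rw [this, exp_zero, mul_one]
      exact h1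
    · push_cast
      have hn : 1 ≤ n := by omega
      have ihn := ih hn
      have hstep := hrec n hn ihn
      set E := exp (-(σ * ((n : ℝ) - 1)) / (4 * β * ρ ^ 2)) with hE
      have hEpos : 0 < E := exp_pos _
      have key : h (n + 1) ≤ (1 - α / 2) * (C * E) := by
        calc h (n + 1) ≤ (1 - α) * h n + (α ^ 2 * β * ρ ^ 2 / σ) * C * E := hstep
          _ ≤ (1 - α) * (C * E) + (α / 2) * (C * E) := by
              rw [hαval]
              have := mul_le_mul_of_nonneg_left ihn (by linarith : (0:ℝ) ≤ 1 - α)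
              nlinarith
          _ = (1 - α / 2) * (C * E) := by ring
      have hexp : exp (-(σ * (((n : ℕ) + 1 : ℝ) - 1)) / (4 * β * ρ ^ 2)) =
          exp (-(α / 2)) * E := by
        rw [hE, ← exp_add]
        congr 1
        rw [hα]
        field_simp
        ring
      have hle : (1 - α / 2 : ℝ) ≤ exp (-(α / 2)) := by
        have := Real.add_one_le_exp (-(α / 2))
        linarith
      calc h (n + 1) ≤ (1 - α / 2) * (C * E) := key
        _ ≤ exp (-(α / 2)) * (C * E) := by
            apply mul_le_mul_of_nonneg_right hle (by positivity)
        _ = C * exp (-(σ * (((n : ℕ) + 1 : ℝ) - 1)) / (4 * β * ρ ^ 2)) := by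
            rw [hexp]; ring
end

section
/- Under the conditions of the linearly-convergent conditional gradient algorithm (f β-smooth and σ-strongly convex over polytope P, local linear oracle with parameter ρ, step size α = σ/(2βρ²), radii r_t² = (C/σ)e^{-σ(t-1)/(4βρ²)}), after t iterations the iterate x_{t+1} satisfies f(x_{t+1}) - f(x*) ≤ C·e^{-σt/(4βρ²)}, where C ≥ f(x_1) - f(x*). -/
open Real
open scoped RealInnerProductSpace

set_option maxHeartbeats 1600000 in
/-- Linear convergence of the conditional gradient algorithm with a local linear oracle:
if `f` is `β`-smooth and `σ`-strongly convex on the polytope `P`, the iterates satisfy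
`x (t+1) = x t + α • (p t - x t)` where `p t` is the output of a local linear oracle with
parameter `ρ` queried at `(x t, r t, ∇f (x t))`, `α = σ/(2βρ²)` and
`r t = min (√((C/σ) e^{-σ(t-1)/(4βρ²)})) D`, then for every `t ≥ 1`,
`f (x (t+1)) - f xs ≤ C * exp (-σ t / (4βρ²))`. -/
theorem stmt_3 {n : ℕ} (P : Set (EuclideanSpace ℝ (Fin n))) (hP : Convex ℝ P)
    (hPc : IsCompact P) (hPne : P.Nonempty)
    (f : EuclideanSpace ℝ (Fin n) → ℝ) (g : EuclideanSpace ℝ (Fin n) → EuclideanSpace ℝ (Fin n))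
    (β σ ρ C D α : ℝ) (hβ : 0 < β) (hσ : 0 < σ) (hσβ : σ ≤ 2 * β * ρ ^ 2) (hρ : 1 ≤ ρ)
    (hD : ∀ a ∈ P, ∀ b ∈ P, ‖a - b‖ ≤ D)
    (hsmooth : ∀ x ∈ P, ∀ y ∈ P, f y ≤ f x + ⟪g x, y - x⟫ + β * ‖x - y‖ ^ 2)
    (hstrong : ∀ x ∈ P, ∀ y ∈ P, f y ≥ f x + ⟪g x, y - x⟫ + σ * ‖x - y‖ ^ 2)
    (xs : EuclideanSpace ℝ (Fin n)) (hxs : xs ∈ P) (hmin : ∀ y ∈ P, f xs ≤ f y)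
    (x p : ℕ → EuclideanSpace ℝ (Fin n)) (r : ℕ → ℝ)
    (hx1 : x 1 ∈ P) (hC : C ≥ f (x 1) - f xs) (hCpos : 0 < C)
    (hα : α = σ / (2 * β * ρ ^ 2))
    (hr : ∀ t : ℕ, 1 ≤ t →
      r t = min (Real.sqrt ((C / σ) * exp (-(σ * ((t : ℝ) - 1)) / (4 * β * ρ ^ 2)))) D)
    -- the local linear oracle guarantees at each step:
    (hpP : ∀ t : ℕ, 1 ≤ t → p t ∈ P)
    (hllo1 : ∀ t : ℕ, 1 ≤ t → ∀ y ∈ P, ‖x t - y‖ ≤ r t →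
      ⟪g (x t), p t⟫ ≤ ⟪g (x t), y⟫)
    (hllo2 : ∀ t : ℕ, 1 ≤ t → ‖x t - p t‖ ≤ ρ * r t)
    (hupd : ∀ t : ℕ, 1 ≤ t → x (t + 1) = x t + α • (p t - x t)) :
    ∀ t : ℕ, 1 ≤ t →
      f (x (t + 1)) - f xs ≤ C * exp (-(σ * (t : ℝ)) / (4 * β * ρ ^ 2)) := by
  have hρ0 : (0:ℝ) < ρ := lt_of_lt_of_le one_pos hρ
  have hden : (0:ℝ) < 2 * β * ρ ^ 2 := by positivity
  have hα0 : 0 < α := by rw [hα]; positivity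
  have hα1 : α ≤ 1 := by rw [hα, div_le_one hden]; exact hσβ
  -- first-order optimality at xs
  have hopt : ∀ y ∈ P, 0 ≤ ⟪g xs, y - xs⟫ := by
    intro y hy
    by_contra hneg
    push_neg at hneg
    set c : ℝ := -⟪g xs, y - xs⟫ with hc
    have hc0 : 0 < c := by rw [hc]; linarith
    set N : ℝ := ‖y - xs‖ ^ 2 with hN
    have hN0 : 0 ≤ N := by positivity
    set s : ℝ := min 1 (c / (2 * β * (N + 1))) with hs
    have hs0 : 0 < s := lt_min one_pos (by positivity)
    have hs1 : s ≤ 1 := min_le_left _ _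
    have hs2 : s ≤ c / (2 * β * (N + 1)) := min_le_right _ _
    set z := xs + s • (y - xs) with hz
    have hzP : z ∈ P := by
      have hzeq : z = (1 - s) • xs + s • y := by rw [hz]; module
      rw [hzeq]
      exact hP hxs hy (by linarith) (le_of_lt hs0) (by ring)
    have h1 := hsmooth xs hxs z hzP
    have h2 := hmin z hzP
    have hinner : ⟪g xs, z - xs⟫ = s * ⟪g xs, y - xs⟫ := by
      have : z - xs = s • (y - xs) := by rw [hz]; module
      rw [this, real_inner_smul_right]
    have hnorm : ‖xs - z‖ ^ 2 = s ^ 2 * N := by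
      have : xs - z = (-s) • (y - xs) := by rw [hz]; module
      rw [hN, this, norm_smul]
      simp [abs_of_pos hs0]
      ring
    rw [hinner, hnorm] at h1
    have hiy : ⟪g xs, y - xs⟫ = -c := by rw [hc]; ring
    rw [hiy] at h1
    have key : c ≤ s * (β * N) := by nlinarith [hs0]
    have h3 : s * (β * N) ≤ (c / (2 * β * (N + 1))) * (β * N) :=
      mul_le_mul_of_nonneg_right hs2 (by positivity)
    have h4 : (c / (2 * β * (N + 1))) * (β * N) ≤ c / 2 := by
      rw [div_mul_eq_mul_div, div_le_div_iff₀ (by positivity) two_pos]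
      nlinarith
    linarith
  -- main induction
  have key : ∀ t : ℕ, 1 ≤ t →
      x t ∈ P ∧ f (x t) - f xs ≤ C * exp (-(σ * ((t : ℝ) - 1)) / (4 * β * ρ ^ 2)) := by
    intro t ht
    induction t, ht using Nat.le_induction with
    | base =>
      refine ⟨hx1, ?_⟩
      norm_num
      linarith
    | succ t ht ih =>
      obtain ⟨hxP, hft⟩ := ih
      set Et : ℝ := C * exp (-(σ * ((t : ℝ) - 1)) / (4 * β * ρ ^ 2)) with hEt
      have hEt0 : 0 < Et := by rw [hEt]; positivity
      -- distance to optimum bound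
      have hdist2 : σ * ‖x t - xs‖ ^ 2 ≤ f (x t) - f xs := by
        have h1 := hstrong xs hxs (x t) hxP
        have h2 := hopt (x t) hxP
        rw [norm_sub_rev] at h1
        linarith
      have hEtσ : (C / σ) * exp (-(σ * ((t : ℝ) - 1)) / (4 * β * ρ ^ 2)) = Et / σ := by
        rw [hEt]; ring
      have hdist : ‖x t - xs‖ ≤ r t := by
        rw [hr t ht, hEtσ]
        refine le_min ?_ (hD _ hxP _ hxs)
        rw [show Et / σ = ‖x t - xs‖^2 + (Et/σ - ‖x t - xs‖^2) from by ring]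
        have hsq : ‖x t - xs‖ ^ 2 ≤ Et / σ := by
          rw [le_div_iff₀ hσ]
          nlinarith
        calc ‖x t - xs‖ = Real.sqrt (‖x t - xs‖ ^ 2) := by
              rw [Real.sqrt_sq (norm_nonneg _)]
          _ ≤ _ := Real.sqrt_le_sqrt (by linarith)
      have hrEt : r t ≤ Real.sqrt (Et / σ) := by
        rw [hr t ht, hEtσ]; exact min_le_left _ _
      have hpt2 : ‖x t - p t‖ ^ 2 ≤ ρ ^ 2 * (Et / σ) := by
        have h1 := hllo2 t ht
        have h3 : ‖x t - p t‖ ≤ ρ * Real.sqrt (Et / σ) :=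
          le_trans h1 (mul_le_mul_of_nonneg_left hrEt hρ0.le)
        have h4 : ‖x t - p t‖ ^ 2 ≤ (ρ * Real.sqrt (Et / σ)) ^ 2 :=
          pow_le_pow_left₀ (norm_nonneg _) h3 2
        have h5 : (ρ * Real.sqrt (Et / σ)) ^ 2 = ρ ^ 2 * (Et / σ) := by
          rw [mul_pow, Real.sq_sqrt (by positivity)]
        linarith
      have hinner : ⟪g (x t), p t - x t⟫ ≤ f xs - f (x t) := by
        have h1 := hllo1 t ht xs hxs hdist
        have h2 := hstrong (x t) hxP xs hxs
        have e1 : ⟪g (x t), p t - x t⟫ = ⟪g (x t), p t⟫ - ⟪g (x t), x t⟫ :=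
          inner_sub_right _ _ _
        have e2 : ⟪g (x t), xs - x t⟫ = ⟪g (x t), xs⟫ - ⟪g (x t), x t⟫ :=
          inner_sub_right _ _ _
        have h5 : 0 ≤ σ * ‖x t - xs‖ ^ 2 := by positivity
        linarith
      have hxsuc : x (t + 1) ∈ P := by
        rw [hupd t ht]
        have heq : x t + α • (p t - x t) = (1 - α) • x t + α • p t := by module
        rw [heq]
        exact hP hxP (hpP t ht) (by linarith) hα0.le (by ring)
      have hsm := hsmooth (x t) hxP (x (t + 1)) hxsuc
      have e4 : ⟪g (x t), x (t + 1) - x t⟫ = α * ⟪g (x t), p t - x t⟫ := by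
        have : x (t + 1) - x t = α • (p t - x t) := by rw [hupd t ht]; module
        rw [this, real_inner_smul_right]
      have e5 : ‖x t - x (t + 1)‖ ^ 2 = α ^ 2 * ‖x t - p t‖ ^ 2 := by
        have : x t - x (t + 1) = α • (x t - p t) := by rw [hupd t ht]; module
        rw [this, norm_smul]
        simp [abs_of_pos hα0]
        ring
      rw [e4, e5] at hsm
      have h6 : β * (α ^ 2 * ‖x t - p t‖ ^ 2) ≤ β * (α ^ 2 * (ρ ^ 2 * (Et / σ))) := by
        apply mul_le_mul_of_nonneg_left _ hβ.le
        exact mul_le_mul_of_nonneg_left hpt2 (sq_nonneg α)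
      have h7 : α * ⟪g (x t), p t - x t⟫ ≤ α * (f xs - f (x t)) :=
        mul_le_mul_of_nonneg_left hinner hα0.le
      have h8 : (1 - α) * (f (x t) - f xs) ≤ (1 - α) * Et :=
        mul_le_mul_of_nonneg_left hft (by linarith)
      have half : β * (α ^ 2 * (ρ ^ 2 * (Et / σ))) = (α / 2) * Et := by
        rw [hα]; field_simp
      have h9 : f (x t) + α * (f xs - f (x t)) - f xs = (1 - α) * (f (x t) - f xs) := by
        ring
      have main2 : f (x (t + 1)) - f xs ≤ (1 - α / 2) * Et := by
        linarith [hsm, h6, h7, h8, half, h9]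
      have hexp1 : -(α / 2) + 1 ≤ exp (-(α / 2)) := Real.add_one_le_exp _
      have final : (1 - α / 2) * Et ≤ exp (-(α / 2)) * Et :=
        mul_le_mul_of_nonneg_right (by linarith) hEt0.le
      have hexp : exp (-(α / 2)) * Et
          = C * exp (-(σ * (((t : ℝ) + 1) - 1)) / (4 * β * ρ ^ 2)) := by
        rw [hEt, hα, mul_comm (exp _), mul_assoc, ← Real.exp_add]
        congr 1
        field_simp
        ring
      refine ⟨hxsuc, ?_⟩
      push_cast
      calc f (x (t + 1)) - f xs ≤ (1 - α / 2) * Et := main2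
        _ ≤ exp (-(α / 2)) * Et := final
        _ = _ := hexp
  intro t ht
  have h := (key (t + 1) (by omega)).2
  have e : ((t + 1 : ℕ) : ℝ) - 1 = (t : ℝ) := by push_cast; ring
  rw [e] at h
  exact h
end

section
/- Let z ∈ P = {x : A₁x = b₁, A₂x ≤ b₂}, C(z) = {i : A₂(i)z = b₂(i)}, and C₀(z) ⊆ C(z) such that the rows {A₂(i)}_{i∈C₀(z)} form a basis of span{A₂(i)}_{i∈C(z)}. If y ∈ P satisfies A₂(i)y < b₂(i) for some i ∈ C(z), then there exists i₀ ∈ C₀(z) with A₂(i₀)y < b₂(i₀). -/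
/-- Let `z ∈ P = {x : A₁x = b₁, A₂x ≤ b₂}`, `C(z) = {i : A₂(i)z = b₂(i)}`, and
`C₀(z) ⊆ C(z)` such that the rows `{A₂(i)}_{i ∈ C₀(z)}` are linearly independent and span
the same subspace as `{A₂(i)}_{i ∈ C(z)}`. If `y ∈ P` satisfies `A₂(i)y < b₂(i)` for some
`i ∈ C(z)`, then there exists `i₀ ∈ C₀(z)` with `A₂(i₀)y < b₂(i₀)`. -/
theorem stmt_5 {n m₁ m : ℕ}
    (A₁ : Fin m₁ → Fin n → ℝ) (b₁ : Fin m₁ → ℝ)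
    (A₂ : Fin m → Fin n → ℝ) (b₂ : Fin m → ℝ)
    (P : Set (Fin n → ℝ))
    (hP : P = {x | (∀ i, ∑ k, A₁ i k * x k = b₁ i) ∧ (∀ j, ∑ k, A₂ j k * x k ≤ b₂ j)})
    (z : Fin n → ℝ) (hz : z ∈ P)
    (Cz C₀ : Set (Fin m))
    (hCz : Cz = {j | ∑ k, A₂ j k * z k = b₂ j})
    (hC₀ : C₀ ⊆ Cz)
    (hindep : LinearIndependent ℝ (fun j : C₀ => A₂ j))
    (hspan : Submodule.span ℝ (A₂ '' Cz) = Submodule.span ℝ (A₂ '' C₀))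
    (y : Fin n → ℝ) (hy : y ∈ P)
    (i : Fin m) (hi : i ∈ Cz) (hstrict : ∑ k, A₂ i k * y k < b₂ i) :
    ∃ i₀ ∈ C₀, ∑ k, A₂ i₀ k * y k < b₂ i₀ := by
  subst hP hCz
  by_contra h
  push_neg at h
  -- linear functional v ↦ ∑ k, v k * (z k - y k)
  set L : (Fin n → ℝ) →ₗ[ℝ] ℝ :=
    { toFun := fun v => ∑ k, v k * (z k - y k)
      map_add' := by
        intro a b
        simp [add_mul, Finset.sum_add_distrib]
      map_smul' := by
        intro c a
        simp [Finset.mul_sum, mul_assoc] } with hL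
  have hLker : ∀ j ∈ C₀, A₂ j ∈ LinearMap.ker L := by
    intro j hj
    have heqz : ∑ k, A₂ j k * z k = b₂ j := hC₀ hj
    have hle : ∑ k, A₂ j k * y k ≤ b₂ j := hy.2 j
    have hge : b₂ j ≤ ∑ k, A₂ j k * y k := h j hj
    have heqy : ∑ k, A₂ j k * y k = b₂ j := le_antisymm hle hge
    simp only [LinearMap.mem_ker, hL, LinearMap.coe_mk, AddHom.coe_mk]
    have : ∑ k, A₂ j k * (z k - y k)
        = (∑ k, A₂ j k * z k) - ∑ k, A₂ j k * y k := by
      rw [← Finset.sum_sub_distrib]; congr 1; ext k; ring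
    rw [this, heqz, heqy, sub_self]
  have hsub : A₂ '' C₀ ⊆ (LinearMap.ker L : Set (Fin n → ℝ)) := by
    rintro _ ⟨j, hj, rfl⟩; exact hLker j hj
  have hspanle : Submodule.span ℝ (A₂ '' {j : Fin m | ∑ k, A₂ j k * z k = b₂ j}) ≤ LinearMap.ker L := by
    rw [hspan]; exact Submodule.span_le.mpr hsub
  have hiker : A₂ i ∈ LinearMap.ker L :=
    hspanle (Submodule.subset_span ⟨i, hi, rfl⟩)
  have hLi : ∑ k, A₂ i k * (z k - y k) = 0 := hiker
  have heqz : ∑ k, A₂ i k * z k = b₂ i := hi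
  have : ∑ k, A₂ i k * (z k - y k)
      = (∑ k, A₂ i k * z k) - ∑ k, A₂ i k * y k := by
    rw [← Finset.sum_sub_distrib]; congr 1; ext k; ring
  rw [this, heqz] at hLi
  linarith
end

section
/- Let x = Σᵢ λᵢvᵢ be a convex combination of vertices of polytope P and y ∈ P. Write y = Σᵢ(λᵢ - Δᵢ)vᵢ + (ΣᵢΔᵢ)z with Δᵢ ∈ [0, λᵢ], z ∈ P, minimizing ΣᵢΔᵢ. Then for every i with Δᵢ > 0, there exists a row index j with A₂(j)vᵢ < b₂(j) and A₂(j)z = b₂(j). -/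
/-- Minimal-mass decompositions hit tight constraints: let `x = Σᵢ λᵢ vᵢ` be a convex
combination of vertices of the polytope `P` and `y ∈ P`. Write
`y = Σᵢ (λᵢ - Δᵢ) vᵢ + (Σᵢ Δᵢ) z` with `Δᵢ ∈ [0, λᵢ]` and `z ∈ P`, where `Σᵢ Δᵢ` is
minimal among all such representations. Then for every `i` with `Δᵢ > 0` there exists a
row index `j` with `A₂(j)vᵢ < b₂(j)` and `A₂(j)z = b₂(j)`. -/
theorem stmt_6 {n m₁ m : ℕ} {k : ℕ}
    (A₁ : Fin m₁ → Fin n → ℝ) (b₁ : Fin m₁ → ℝ)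
    (A₂ : Fin m → Fin n → ℝ) (b₂ : Fin m → ℝ)
    (P : Set (EuclideanSpace ℝ (Fin n)))
    (hP : P = {x | (∀ i, ∑ l, A₁ i l * x l = b₁ i) ∧ (∀ j, ∑ l, A₂ j l * x l ≤ b₂ j)})
    (hbdd : Bornology.IsBounded P)
    (v : Fin k → EuclideanSpace ℝ (Fin n)) (hv : ∀ i, v i ∈ Set.extremePoints ℝ P)
    (lam : Fin k → ℝ) (hlam : ∀ i, 0 < lam i) (hlamsum : ∑ i, lam i = 1)
    (x : EuclideanSpace ℝ (Fin n)) (hx : x = ∑ i, lam i • v i)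
    (y : EuclideanSpace ℝ (Fin n)) (hy : y ∈ P)
    (Δ : Fin k → ℝ) (z : EuclideanSpace ℝ (Fin n)) (hzP : z ∈ P)
    (hΔ : ∀ i, Δ i ∈ Set.Icc 0 (lam i))
    (hdecomp : y = ∑ i, (lam i - Δ i) • v i + (∑ i, Δ i) • z)
    (hmin : ∀ (Δ' : Fin k → ℝ) (z' : EuclideanSpace ℝ (Fin n)), z' ∈ P →
      (∀ i, Δ' i ∈ Set.Icc 0 (lam i)) →
      y = ∑ i, (lam i - Δ' i) • v i + (∑ i, Δ' i) • z' →
      ∑ i, Δ i ≤ ∑ i, Δ' i) :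
    ∀ i, 0 < Δ i →
      ∃ j, (∑ l, A₂ j l * (v i) l < b₂ j) ∧ (∑ l, A₂ j l * z l = b₂ j) := by

  intro i hΔi
  by_contra hcon
  push_neg at hcon
  have hviP : v i ∈ P := (hv i).1
  rw [hP] at hviP hzP
  obtain ⟨hvi1, hvi2⟩ := hviP
  obtain ⟨hz1, hz2⟩ := hzP
  set S : ℝ := ∑ j, Δ j with hSdef
  have hΔnn : ∀ j, 0 ≤ Δ j := fun j => (hΔ j).1
  have hΔS : Δ i ≤ S := Finset.single_le_sum (fun j _ => hΔnn j) (Finset.mem_univ i)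
  have hS : 0 < S := lt_of_lt_of_le hΔi hΔS
  -- key dichotomy
  have key : ∀ j, (∑ l, A₂ j l * v i l = b₂ j) ∨ (∑ l, A₂ j l * z l < b₂ j) := by
    intro j
    rcases eq_or_lt_of_le (hvi2 j) with h | h
    · exact Or.inl h
    · exact Or.inr (lt_of_le_of_ne (hz2 j) (hcon j h))
  -- choose ε
  set f : Fin m → ℝ := fun j =>
    if (∑ l, A₂ j l * v i l) < b₂ j then
      S * (b₂ j - ∑ l, A₂ j l * z l) / (b₂ j - ∑ l, A₂ j l * v i l)
    else Δ i with hfdef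
  have hf : ∀ j, 0 < f j := by
    intro j
    simp only [hfdef]
    split_ifs with h
    · have hz : ∑ l, A₂ j l * z l < b₂ j := by
        rcases key j with h' | h'
        · exact absurd h' (ne_of_lt h)
        · exact h'
      exact div_pos (mul_pos hS (by linarith)) (by linarith)
    · exact hΔi
  obtain ⟨ε, hεpos, hεΔ, hεf⟩ : ∃ ε : ℝ, 0 < ε ∧ ε < Δ i ∧ ∀ j, ε ≤ f j := by
    have hEne : (insert (Δ i) (Finset.image f Finset.univ)).Nonempty :=
      ⟨Δ i, Finset.mem_insert_self _ _⟩
    set M : ℝ := (insert (Δ i) (Finset.image f Finset.univ)).min' hEne with hMdef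
    have hMpos : 0 < M := by
      have hm := Finset.min'_mem _ hEne
      rw [← hMdef, Finset.mem_insert] at hm
      rcases hm with hm | hm
      · rw [hm]; exact hΔi
      · obtain ⟨j, _, hj⟩ := Finset.mem_image.mp hm
        rw [← hj]; exact hf j
    have hMΔ : M ≤ Δ i := Finset.min'_le _ _ (Finset.mem_insert_self _ _)
    have hMf : ∀ j, M ≤ f j := fun j =>
      Finset.min'_le _ _ (Finset.mem_insert_of_mem (Finset.mem_image_of_mem f (Finset.mem_univ j)))
    exact ⟨M / 2, by linarith, by linarith, fun j => by linarith [hMf j]⟩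
  have hSε : 0 < S - ε := by linarith
  set z' : EuclideanSpace ℝ (Fin n) := (S - ε)⁻¹ • (S • z - ε • v i) with hz'def
  have hz'l : ∀ l, z' l = (S - ε)⁻¹ * (S * z l - ε * v i l) := by
    intro l
    simp [hz'def, PiLp.smul_apply, PiLp.sub_apply, smul_eq_mul]
  have hrow : ∀ a : Fin n → ℝ,
      ∑ l, a l * z' l = (S - ε)⁻¹ * (S * (∑ l, a l * z l) - ε * (∑ l, a l * v i l)) := by
    intro a
    simp only [hz'l]
    rw [Finset.mul_sum, Finset.mul_sum, ← Finset.sum_sub_distrib, Finset.mul_sum]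
    apply Finset.sum_congr rfl
    intro l _
    ring
  have hz'P : z' ∈ P := by
    rw [hP]
    constructor
    · intro j
      rw [hrow (A₁ j), hz1 j, hvi1 j]
      field_simp
    · intro j
      rw [hrow (A₂ j)]
      rw [inv_mul_le_iff₀ hSε]
      rcases eq_or_lt_of_le (hvi2 j) with h | h
      · have := hz2 j
        nlinarith
      · have hzlt : ∑ l, A₂ j l * z l < b₂ j := by
          rcases key j with h' | h'
          · exact absurd h' (ne_of_lt h)
          · exact h'
        have hef := hεf j
        rw [hfdef] at hef
        simp only [if_pos h] at hef
        have hc : ε * (b₂ j - ∑ l, A₂ j l * v i l) ≤ S * (b₂ j - ∑ l, A₂ j l * z l) :=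
          (le_div_iff₀ (by linarith)).mp hef
        nlinarith
  set Δ' : Fin k → ℝ := Function.update Δ i (Δ i - ε) with hΔ'def
  have hΔ'sum : ∑ j, Δ' j = S - ε := by
    have : ∀ j ∈ Finset.univ, Δ' j = Δ j + (if j = i then -ε else 0) := by
      intro j _
      by_cases h : j = i
      · subst h; simp [hΔ'def]; ring
      · simp [hΔ'def, Function.update_of_ne h, h]
    rw [Finset.sum_congr rfl this, Finset.sum_add_distrib]
    simp [← hSdef]
    ring
  have hΔ'Icc : ∀ j, Δ' j ∈ Set.Icc 0 (lam j) := by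
    intro j
    by_cases h : j = i
    · rw [h, hΔ'def, Function.update_self]
      exact ⟨by linarith, by linarith [(hΔ i).2]⟩
    · rw [hΔ'def, Function.update_of_ne h]
      exact hΔ j
  have hsmul : (S - ε) • z' = S • z - ε • v i := by
    rw [hz'def, smul_inv_smul₀ (ne_of_gt hSε)]
  have hsumv : ∑ j, (lam j - Δ' j) • v j = (∑ j, (lam j - Δ j) • v j) + ε • v i := by
    have : ∀ j ∈ Finset.univ, (lam j - Δ' j) • v j
        = (lam j - Δ j) • v j + (if j = i then ε • v i else 0) := by
      intro j _
      by_cases h : j = i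
      · subst h
        rw [hΔ'def, Function.update_self, if_pos rfl]
        rw [← add_smul]
        ring_nf
      · simp [hΔ'def, Function.update_of_ne h, h]
    rw [Finset.sum_congr rfl this, Finset.sum_add_distrib]
    simp
  have hdecomp' : y = ∑ j, (lam j - Δ' j) • v j + (∑ j, Δ' j) • z' := by
    rw [hΔ'sum, hsmul, hsumv, hdecomp]
    abel
  have := hmin Δ' z' hz'P hΔ'Icc hdecomp'
  rw [hΔ'sum] at this
  linarith
end

section
/- With the decomposition y = Σᵢ(λᵢ - Δᵢ)vᵢ + (ΣᵢΔᵢ)z minimizing ΣΔᵢ, if ‖x - y‖ ≤ r then ΣᵢΔᵢ ≤ (√n·ψ/ξ)·r, where ψ = ψ(P) bounds the spectral norm of any submatrix of linearly independent rows of A₂ and ξ = ξ(P) = min over vertices v and non-tight constraints j of b₂(j) - A₂(j)v. -/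
open Finset

/-- The linear functional `u ↦ ∑ l, c l * u l` on Euclidean space. -/
def rowL {n : ℕ} (c : Fin n → ℝ) : EuclideanSpace ℝ (Fin n) →ₗ[ℝ] ℝ where
  toFun u := ∑ l, c l * u l
  map_add' u w := by
    simp only [PiLp.add_apply, mul_add, Finset.sum_add_distrib]
  map_smul' a u := by
    simp only [PiLp.smul_apply, smul_eq_mul, RingHom.id_apply, Finset.mul_sum]
    exact Finset.sum_congr rfl fun l _ => by ring

lemma rowL_apply {n : ℕ} (c : Fin n → ℝ) (u : EuclideanSpace ℝ (Fin n)) :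
    rowL c u = ∑ l, c l * u l := rfl

lemma exists_indep_subset {n m : ℕ} (A : Fin m → Fin n → ℝ) (T : Finset (Fin m)) :
    ∃ S : Finset (Fin m), S ⊆ T ∧ (LinearIndependent ℝ (fun j : S => A j)) ∧
      ∀ j ∈ T, A j ∈ Submodule.span ℝ (A '' (S : Set (Fin m))) := by
  classical
  induction T using Finset.induction_on with
  | empty =>
      refine ⟨∅, le_rfl, ?_, by simp⟩
      haveI : IsEmpty ((∅ : Finset (Fin m)) : Type) := Finset.isEmpty_coe_sort.2 rfl
      exact linearIndependent_empty_type
  | @insert j₀ T' hj₀ ih =>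
      obtain ⟨S, hST, hind, hspan⟩ := ih
      by_cases hmem : A j₀ ∈ Submodule.span ℝ (A '' (S : Set (Fin m)))
      · refine ⟨S, hST.trans (Finset.subset_insert _ _), hind, ?_⟩
        intro j hj
        rcases Finset.mem_insert.1 hj with rfl | hj
        · exact hmem
        · exact hspan j hj
      · have hj₀S : j₀ ∉ (S : Set (Fin m)) := fun h => hj₀ (hST h)
        refine ⟨insert j₀ S, Finset.insert_subset_insert _ hST, ?_, ?_⟩
        · have : LinearIndependent ℝ (fun j : (insert j₀ (S : Set (Fin m)) : Set (Fin m)) => A j) :=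
            (linearIndepOn_insert hj₀S).2 ⟨hind, hmem⟩
          rw [← Finset.coe_insert] at this
          exact this
        · intro j hj
          rcases Finset.mem_insert.1 hj with rfl | hj
          · exact Submodule.subset_span (by simp)
          · refine Submodule.span_mono (Set.image_mono ?_) (hspan j hj)
            simp [Finset.coe_insert, Set.subset_insert]

set_option maxHeartbeats 1000000 in
/-- Mass bound for minimal decompositions: with `y = Σᵢ(λᵢ - Δᵢ)vᵢ + (ΣᵢΔᵢ)z` a
minimal-mass decomposition as in the local linear oracle construction, if `‖x - y‖ ≤ r`
then `Σᵢ Δᵢ ≤ (√n ψ / ξ) r`, where `ψ` bounds the spectral norm of any submatrix of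
linearly independent rows of `A₂`, and `ξ ≤ b₂(j) - A₂(j)v` for every vertex `v` and
non-tight constraint `j`. -/
theorem stmt_7 {n m₁ m : ℕ} {k : ℕ}
    (A₁ : Fin m₁ → Fin n → ℝ) (b₁ : Fin m₁ → ℝ)
    (A₂ : Fin m → Fin n → ℝ) (b₂ : Fin m → ℝ)
    (P : Set (EuclideanSpace ℝ (Fin n)))
    (hP : P = {x | (∀ i, ∑ l, A₁ i l * x l = b₁ i) ∧ (∀ j, ∑ l, A₂ j l * x l ≤ b₂ j)})
    (hbdd : Bornology.IsBounded P)
    (ψ ξ r : ℝ) (hψ : 0 < ψ) (hξ : 0 < ξ) (hr : 0 < r)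
    -- ψ bounds the spectral norm of any submatrix of linearly independent rows of A₂:
    (hψspec : ∀ S : Finset (Fin m), LinearIndependent ℝ (fun j : S => A₂ j) →
      ∀ w : EuclideanSpace ℝ (Fin n),
        Real.sqrt (∑ j ∈ S, (∑ l, A₂ j l * w l) ^ 2) ≤ ψ * ‖w‖)
    -- ξ lower-bounds the slack of non-tight constraints at vertices:
    (hξslack : ∀ u ∈ Set.extremePoints ℝ P, ∀ j,
      ∑ l, A₂ j l * u l < b₂ j → ξ ≤ b₂ j - ∑ l, A₂ j l * u l)
    (v : Fin k → EuclideanSpace ℝ (Fin n)) (hv : ∀ i, v i ∈ Set.extremePoints ℝ P)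
    (lam : Fin k → ℝ) (hlam : ∀ i, 0 < lam i) (hlamsum : ∑ i, lam i = 1)
    (x : EuclideanSpace ℝ (Fin n)) (hx : x = ∑ i, lam i • v i)
    (y : EuclideanSpace ℝ (Fin n)) (hy : y ∈ P) (hxy : ‖x - y‖ ≤ r)
    (Δ : Fin k → ℝ) (z : EuclideanSpace ℝ (Fin n)) (hzP : z ∈ P)
    (hΔ : ∀ i, Δ i ∈ Set.Icc 0 (lam i))
    (hdecomp : y = ∑ i, (lam i - Δ i) • v i + (∑ i, Δ i) • z)
    (hmin : ∀ (Δ' : Fin k → ℝ) (z' : EuclideanSpace ℝ (Fin n)), z' ∈ P →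
      (∀ i, Δ' i ∈ Set.Icc 0 (lam i)) →
      y = ∑ i, (lam i - Δ' i) • v i + (∑ i, Δ' i) • z' →
      ∑ i, Δ i ≤ ∑ i, Δ' i) :
    ∑ i, Δ i ≤ (Real.sqrt n * ψ / ξ) * r := by
  classical
  -- membership in `P`, reformulated through `rowL`
  have hmemP : ∀ u : EuclideanSpace ℝ (Fin n), u ∈ P ↔
      ((∀ i, rowL (A₁ i) u = b₁ i) ∧ (∀ j, rowL (A₂ j) u ≤ b₂ j)) := by
    intro u
    rw [hP]
    exact Iff.rfl
  have hvP : ∀ i, v i ∈ P := fun i => extremePoints_subset (hv i)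
  have hvineq : ∀ i j, rowL (A₂ j) (v i) ≤ b₂ j := fun i => ((hmemP _).1 (hvP i)).2
  have hveq : ∀ i i', rowL (A₁ i') (v i) = b₁ i' := fun i => ((hmemP _).1 (hvP i)).1
  have hzineq : ∀ j, rowL (A₂ j) z ≤ b₂ j := ((hmemP z).1 hzP).2
  have hzeq : ∀ i', rowL (A₁ i') z = b₁ i' := ((hmemP z).1 hzP).1
  -- applying a row functional to the decompositions
  have happ : ∀ c : Fin n → ℝ,
      rowL c y = (∑ i, (lam i - Δ i) * rowL c (v i)) + (∑ i, Δ i) * rowL c z := by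
    intro c
    rw [hdecomp, map_add, map_smul, map_sum]
    simp [smul_eq_mul]
  have happx : ∀ c : Fin n → ℝ, rowL c x = ∑ i, lam i * rowL c (v i) := by
    intro c
    rw [hx, map_sum]
    simp [smul_eq_mul]
  -- the key identity
  have hid : ∀ j : Fin m, (∑ i, Δ i * (b₂ j - rowL (A₂ j) (v i)))
      = (rowL (A₂ j) y - rowL (A₂ j) x) + (∑ i, Δ i) * (b₂ j - rowL (A₂ j) z) := by
    intro j
    have e1 : ∑ i, Δ i * (b₂ j - rowL (A₂ j) (v i))
        = (∑ i, Δ i) * b₂ j - ∑ i, Δ i * rowL (A₂ j) (v i) := by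
      rw [Finset.sum_mul]
      rw [← Finset.sum_sub_distrib]
      exact Finset.sum_congr rfl fun i _ => by ring
    have e2 : ∑ i, (lam i - Δ i) * rowL (A₂ j) (v i)
        = (∑ i, lam i * rowL (A₂ j) (v i)) - ∑ i, Δ i * rowL (A₂ j) (v i) := by
      rw [← Finset.sum_sub_distrib]
      exact Finset.sum_congr rfl fun i _ => by ring
    have h3 := happ (A₂ j)
    have h4 := happx (A₂ j)
    rw [e2] at h3
    rw [e1]
    rw [← h4] at h3
    nlinarith [h3]
  -- tight constraints at z
  set Tst : Finset (Fin m) := Finset.univ.filter (fun j => rowL (A₂ j) z = b₂ j) with hTst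
  obtain ⟨S, hST, hSind, hSspan⟩ := exists_indep_subset A₂ Tst
  -- minimality: every vertex with positive removed mass is non-tight at some j ∈ S
  have hwitness : ∀ i0, 0 < Δ i0 → ∃ j ∈ S, rowL (A₂ j) (v i0) < b₂ j := by
    intro i0 hi0
    by_contra hcon
    push_neg at hcon
    have hSeq : ∀ j ∈ S, rowL (A₂ j) (v i0) = b₂ j := fun j hj =>
      le_antisymm (hvineq i0 j) (hcon j hj)
    -- v i0 is tight on all of Tst
    have hTeq : ∀ j ∈ Tst, rowL (A₂ j) (v i0) = b₂ j := by
      intro j hj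
      set φ : (Fin n → ℝ) →ₗ[ℝ] ℝ :=
        { toFun := fun w => ∑ l, w l * (z l - (v i0) l)
          map_add' := fun u w => by
            simp only [Pi.add_apply, add_mul, Finset.sum_add_distrib]
          map_smul' := fun a u => by
            simp only [Pi.smul_apply, smul_eq_mul, RingHom.id_apply, Finset.mul_sum]
            exact Finset.sum_congr rfl fun l _ => by ring } with hφ
      have hφval : ∀ j' : Fin m, φ (A₂ j') = rowL (A₂ j') z - rowL (A₂ j') (v i0) := by
        intro j'
        show (∑ l, A₂ j' l * (z l - (v i0) l)) = _
        rw [rowL_apply, rowL_apply, ← Finset.sum_sub_distrib]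
        exact Finset.sum_congr rfl fun l _ => by ring
      have hφS : ∀ w ∈ A₂ '' (S : Set (Fin m)), w ∈ LinearMap.ker φ := by
        rintro w ⟨j', hj'S, rfl⟩
        have hj'T : j' ∈ Tst := hST hj'S
        have hz' : rowL (A₂ j') z = b₂ j' := (Finset.mem_filter.1 hj'T).2
        have : φ (A₂ j') = 0 := by
          rw [hφval, hz', hSeq j' hj'S, sub_self]
        exact LinearMap.mem_ker.2 this
      have hker : Submodule.span ℝ (A₂ '' (S : Set (Fin m))) ≤ LinearMap.ker φ :=
        Submodule.span_le.2 hφS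
      have h0 : φ (A₂ j) = 0 := LinearMap.mem_ker.1 (hker (hSspan j hj))
      rw [hφval] at h0
      have hz0 : rowL (A₂ j) z = b₂ j := (Finset.mem_filter.1 hj).2
      linarith
    -- construct a strictly smaller decomposition: contradiction with hmin
    set Λ : ℝ := ∑ i, Δ i with hΛ
    have hΛpos : 0 < Λ :=
      lt_of_lt_of_le hi0 (Finset.single_le_sum (fun i _ => (hΔ i).1) (Finset.mem_univ i0))
    set F : Finset (Fin m) := Finset.univ.filter (fun j => rowL (A₂ j) z < b₂ j) with hF
    set gmin : ℝ := if h : F.Nonempty then F.inf' h (fun j => b₂ j - rowL (A₂ j) z) else 1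
      with hgmin
    have hgpos : 0 < gmin := by
      rw [hgmin]
      split_ifs with h
      · rw [Finset.lt_inf'_iff]
        intro j hj
        have := (Finset.mem_filter.1 hj).2
        linarith
      · norm_num
    have hgle : ∀ j ∈ F, gmin ≤ b₂ j - rowL (A₂ j) z := by
      intro j hj
      rw [hgmin, dif_pos ⟨j, hj⟩]
      exact Finset.inf'_le _ hj
    set B : ℝ := 1 + ∑ j, |b₂ j - rowL (A₂ j) (v i0)| with hB
    have hBpos : 0 < B := by
      have : (0:ℝ) ≤ ∑ j, |b₂ j - rowL (A₂ j) (v i0)| :=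
        Finset.sum_nonneg fun j _ => abs_nonneg _
      rw [hB]; linarith
    have hBj : ∀ j, b₂ j - rowL (A₂ j) (v i0) ≤ B := by
      intro j
      have h1 : b₂ j - rowL (A₂ j) (v i0) ≤ |b₂ j - rowL (A₂ j) (v i0)| := le_abs_self _
      have h2 : |b₂ j - rowL (A₂ j) (v i0)| ≤ ∑ j', |b₂ j' - rowL (A₂ j') (v i0)| :=
        Finset.single_le_sum (f := fun j' => |b₂ j' - rowL (A₂ j') (v i0)|)
          (fun j' _ => abs_nonneg _) (Finset.mem_univ j)
      rw [hB]; linarith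
    set ε : ℝ := min (Δ i0) (min (Λ/2) (Λ * gmin / B)) with hε
    have hεpos : 0 < ε := by
      rw [hε]
      refine lt_min hi0 (lt_min (by linarith) ?_)
      positivity
    have hεΔ : ε ≤ Δ i0 := min_le_left _ _
    have hεΛ : ε ≤ Λ/2 := le_trans (min_le_right _ _) (min_le_left _ _)
    have hεg : ε ≤ Λ * gmin / B := le_trans (min_le_right _ _) (min_le_right _ _)
    have hΛε : 0 < Λ - ε := by linarith
    set z' : EuclideanSpace ℝ (Fin n) := ((Λ - ε)⁻¹ * Λ) • z - ((Λ - ε)⁻¹ * ε) • v i0 with hz'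
    have hz'val : ∀ c : Fin n → ℝ,
        rowL c z' = (Λ - ε)⁻¹ * Λ * rowL c z - (Λ - ε)⁻¹ * ε * rowL c (v i0) := by
      intro c
      rw [hz', map_sub, map_smul, map_smul]
      simp [smul_eq_mul]
    have hinv : (Λ - ε)⁻¹ * (Λ - ε) = 1 := inv_mul_cancel₀ (ne_of_gt hΛε)
    have hz'P : z' ∈ P := by
      rw [hmemP]
      constructor
      · intro i'
        rw [hz'val, hzeq, hveq]
        have : (Λ - ε)⁻¹ * Λ * b₁ i' - (Λ - ε)⁻¹ * ε * b₁ i'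
            = ((Λ - ε)⁻¹ * (Λ - ε)) * b₁ i' := by ring
        rw [this, hinv, one_mul]
      · intro j
        rw [hz'val]
        by_cases hj : rowL (A₂ j) z = b₂ j
        · have hjT : j ∈ Tst := Finset.mem_filter.2 ⟨Finset.mem_univ j, hj⟩
          rw [hj, hTeq j hjT]
          have : (Λ - ε)⁻¹ * Λ * b₂ j - (Λ - ε)⁻¹ * ε * b₂ j
              = ((Λ - ε)⁻¹ * (Λ - ε)) * b₂ j := by ring
          rw [this, hinv, one_mul]
        · have hjlt : rowL (A₂ j) z < b₂ j := lt_of_le_of_ne (hzineq j) hj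
          have hjF : j ∈ F := Finset.mem_filter.2 ⟨Finset.mem_univ j, hjlt⟩
          have h1 : gmin ≤ b₂ j - rowL (A₂ j) z := hgle j hjF
          -- ε * (b₂ j - rowL (A₂ j) (v i0)) ≤ Λ * (b₂ j - rowL (A₂ j) z)
          have h2 : ε * B ≤ Λ * gmin := by
            rw [le_div_iff₀ hBpos] at hεg
            exact hεg
          have h3 : ε * (b₂ j - rowL (A₂ j) (v i0)) ≤ ε * B :=
            mul_le_mul_of_nonneg_left (hBj j) (le_of_lt hεpos)
          have h4 : Λ * gmin ≤ Λ * (b₂ j - rowL (A₂ j) z) :=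
            mul_le_mul_of_nonneg_left h1 (le_of_lt hΛpos)
          have h5 : Λ * rowL (A₂ j) z - ε * rowL (A₂ j) (v i0) ≤ (Λ - ε) * b₂ j := by
            nlinarith
          calc (Λ - ε)⁻¹ * Λ * rowL (A₂ j) z - (Λ - ε)⁻¹ * ε * rowL (A₂ j) (v i0)
              = (Λ * rowL (A₂ j) z - ε * rowL (A₂ j) (v i0)) / (Λ - ε) := by
                field_simp
            _ ≤ b₂ j := by
                rw [div_le_iff₀ hΛε]
                nlinarith
    set Δ' : Fin k → ℝ := Function.update Δ i0 (Δ i0 - ε) with hΔ'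
    have hΔ'sum : ∑ i, Δ' i = Λ - ε := by
      rw [hΔ', Finset.sum_update_of_mem (Finset.mem_univ i0)]
      have : Λ = Δ i0 + ∑ i ∈ Finset.univ \ {i0}, Δ i := by
        rw [hΛ, ← Finset.sum_eq_add_sum_sdiff_singleton_of_mem (Finset.mem_univ i0)]
      linarith
    have hΔ'Icc : ∀ i, Δ' i ∈ Set.Icc 0 (lam i) := by
      intro i
      rw [hΔ']
      by_cases h : i = i0
      · subst h
        rw [Function.update_self]
        exact ⟨by linarith, by linarith [(hΔ i).2]⟩
      · rw [Function.update_of_ne h]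
        exact hΔ i
    have hdecomp' : y = ∑ i, (lam i - Δ' i) • v i + (∑ i, Δ' i) • z' := by
      rw [hΔ'sum]
      have hsum' : ∑ i, (lam i - Δ' i) • v i
          = (∑ i, (lam i - Δ i) • v i) + ε • v i0 := by
        have : ∀ i, (lam i - Δ' i) • v i
            = (lam i - Δ i) • v i + (if i = i0 then ε • v i0 else 0) := by
          intro i
          by_cases h : i = i0
          · subst h
            rw [hΔ', Function.update_self, if_pos rfl, ← add_smul]
            congr 1
            ring
          · rw [hΔ', Function.update_of_ne h, if_neg h, add_zero]
        rw [Finset.sum_congr rfl fun i _ => this i, Finset.sum_add_distrib,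
          Finset.sum_ite_eq' Finset.univ i0 (fun _ => ε • v i0)]
        simp
      have hz'eq : (Λ - ε) • z' = Λ • z - ε • v i0 := by
        rw [hz', smul_sub, smul_smul, smul_smul, ← mul_assoc, ← mul_assoc,
          mul_inv_cancel₀ (ne_of_gt hΛε), one_mul, one_mul]
      rw [hsum', hz'eq, hdecomp]
      module
    have hcontra := hmin Δ' z' hz'P hΔ'Icc hdecomp'
    rw [hΔ'sum] at hcontra
    linarith
  -- the main chain
  have hkey : ξ * (∑ i, Δ i) ≤ ∑ j ∈ S, (rowL (A₂ j) y - rowL (A₂ j) x) := by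
    have h1 : ∀ i, ξ * Δ i ≤ ∑ j ∈ S, Δ i * (b₂ j - rowL (A₂ j) (v i)) := by
      intro i
      rcases eq_or_lt_of_le (hΔ i).1 with h0 | hpos
      · rw [← h0]
        simp
      · obtain ⟨j0, hj0S, hj0lt⟩ := hwitness i hpos
        have hξ' : ξ ≤ b₂ j0 - rowL (A₂ j0) (v i) := hξslack (v i) (hv i) j0 hj0lt
        calc ξ * Δ i ≤ (b₂ j0 - rowL (A₂ j0) (v i)) * Δ i :=
              mul_le_mul_of_nonneg_right hξ' (le_of_lt hpos)
          _ = Δ i * (b₂ j0 - rowL (A₂ j0) (v i)) := by ring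
          _ ≤ ∑ j ∈ S, Δ i * (b₂ j - rowL (A₂ j) (v i)) :=
              Finset.single_le_sum (f := fun j => Δ i * (b₂ j - rowL (A₂ j) (v i)))
                (fun j _ => mul_nonneg (le_of_lt hpos)
                (by linarith [hvineq i j])) hj0S
    calc ξ * (∑ i, Δ i) = ∑ i, ξ * Δ i := by rw [Finset.mul_sum]
      _ ≤ ∑ i, ∑ j ∈ S, Δ i * (b₂ j - rowL (A₂ j) (v i)) :=
          Finset.sum_le_sum fun i _ => h1 i
      _ = ∑ j ∈ S, ∑ i, Δ i * (b₂ j - rowL (A₂ j) (v i)) := Finset.sum_comm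
      _ = ∑ j ∈ S, (rowL (A₂ j) y - rowL (A₂ j) x) := by
          refine Finset.sum_congr rfl fun j hj => ?_
          have hjT : j ∈ Tst := hST hj
          have hz0 : rowL (A₂ j) z = b₂ j := (Finset.mem_filter.1 hjT).2
          rw [hid j, hz0]
          simp
  -- Cauchy-Schwarz and the spectral bound
  have hw : ∀ j : Fin m, rowL (A₂ j) (y - x) = rowL (A₂ j) y - rowL (A₂ j) x :=
    fun j => map_sub _ _ _
  have hcard : (S.card : ℝ) ≤ (n : ℝ) := by
    have h1 : Fintype.card S ≤ Module.finrank ℝ (Fin n → ℝ) :=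
      LinearIndependent.fintype_card_le_finrank hSind
    rw [Module.finrank_fin_fun, Fintype.card_coe] at h1
    exact_mod_cast h1
  have habs : ∑ j ∈ S, (rowL (A₂ j) y - rowL (A₂ j) x)
      ≤ Real.sqrt n * (ψ * ‖y - x‖) := by
    have h2 : ∑ j ∈ S, (rowL (A₂ j) y - rowL (A₂ j) x)
        ≤ ∑ j ∈ S, |rowL (A₂ j) (y - x)| := by
      refine Finset.sum_le_sum fun j _ => ?_
      rw [hw]
      exact le_abs_self _
    have hCS : (∑ j ∈ S, |rowL (A₂ j) (y - x)|)^2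
        ≤ (S.card : ℝ) * ∑ j ∈ S, (rowL (A₂ j) (y - x))^2 := by
      have := Finset.sum_mul_sq_le_sq_mul_sq S (fun _ => (1:ℝ))
        (fun j => |rowL (A₂ j) (y - x)|)
      simpa [sq_abs] using this
    have hnn : (0:ℝ) ≤ ∑ j ∈ S, |rowL (A₂ j) (y - x)| :=
      Finset.sum_nonneg fun j _ => abs_nonneg _
    have hψ' : Real.sqrt (∑ j ∈ S, (rowL (A₂ j) (y - x))^2) ≤ ψ * ‖y - x‖ :=
      hψspec S hSind (y - x)
    have h3 : ∑ j ∈ S, |rowL (A₂ j) (y - x)|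
        ≤ Real.sqrt ((S.card : ℝ)) * Real.sqrt (∑ j ∈ S, (rowL (A₂ j) (y - x))^2) := by
      rw [← Real.sqrt_mul (Nat.cast_nonneg _)]
      rw [← Real.sqrt_sq hnn]
      exact Real.sqrt_le_sqrt hCS
    have h4 : Real.sqrt ((S.card : ℝ)) ≤ Real.sqrt n := Real.sqrt_le_sqrt hcard
    have h5 : (0:ℝ) ≤ Real.sqrt (∑ j ∈ S, (rowL (A₂ j) (y - x))^2) := Real.sqrt_nonneg _
    calc ∑ j ∈ S, (rowL (A₂ j) y - rowL (A₂ j) x)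
        ≤ ∑ j ∈ S, |rowL (A₂ j) (y - x)| := h2
      _ ≤ Real.sqrt ((S.card : ℝ)) * Real.sqrt (∑ j ∈ S, (rowL (A₂ j) (y - x))^2) := h3
      _ ≤ Real.sqrt n * (ψ * ‖y - x‖) := by
          have := mul_le_mul h4 hψ' h5 (Real.sqrt_nonneg _)
          linarith
  have hyx : ‖y - x‖ ≤ r := by rw [norm_sub_rev]; exact hxy
  have hfinal : ξ * (∑ i, Δ i) ≤ Real.sqrt n * ψ * r := by
    have h6 : Real.sqrt n * (ψ * ‖y - x‖) ≤ Real.sqrt n * ψ * r := by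
      have : ψ * ‖y - x‖ ≤ ψ * r := mul_le_mul_of_nonneg_left hyx (le_of_lt hψ)
      nlinarith [Real.sqrt_nonneg (n : ℝ)]
    linarith [hkey, habs]
  rw [div_mul_eq_mul_div, le_div_iff₀ hξ]
  linarith
end

section
/- In the online conditional gradient algorithm for convex losses, with η = √ε/(18Gρ²), α = 1/(3ρ²), r_t = √ε + ηG, and F_t(x) = η Σ_{τ≤t} ∇f_τ(x_τ)ᵀx + ‖x - x_1‖², it holds for all t ∈ [T] that F_{t-1}(x_t) - F_{t-1}(x_t*) ≤ ε and hence ‖x_t - x_t*‖ ≤ √ε, where x_t* = argmin_{x∈P} F_{t-1}(x). -/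
open scoped RealInnerProductSpace

private lemma ocg_arith_aux (q s : ℝ) (hq : 1 ≤ q) (hs : 0 < s) :
    (1 - 1/(3*q)) * (s^2 + (s/(18*q)) * (s + s/(18*q))) + (1/(3*q))^2 * q * (s + s/(18*q))^2
      ≤ s^2 := by
  have hq0 : 0 < q := lt_of_lt_of_le one_pos hq
  have key : s^2 - ((1 - 1/(3*q)) * (s^2 + (s/(18*q)) * (s + s/(18*q)))
      + (1/(3*q))^2 * q * (s + s/(18*q))^2)
      = s^2 * (486*q^2 + 9*q + 2) / (2916 * q^3) := by
    field_simp
    ring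
  nlinarith [key, div_nonneg (by positivity : (0:ℝ) ≤ s^2 * (486*q^2 + 9*q + 2))
    (by positivity : (0:ℝ) ≤ 2916*q^3)]

/-- Tracking lemma for the online conditional gradient algorithm with general convex losses:
with `η = √ε/(18Gρ²)`, `α = 1/(3ρ²)`, `r t = √ε + ηG` and
`F t w = η Σ_{τ ≤ t} ⟪g τ, w⟫ + ‖w - x 1‖²`, the iterates satisfy
`F (t-1) (x t) - F (t-1) (xstar t) ≤ ε` and hence `‖x t - xstar t‖ ≤ √ε` for all `t ∈ [T]`,
where `xstar t` minimizes `F (t-1)` over `P`. -/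
theorem stmt_11 {n : ℕ} (T : ℕ) (P : Set (EuclideanSpace ℝ (Fin n))) (hP : Convex ℝ P)
    (hPc : IsCompact P)
    (G ρ ε η α : ℝ) (hG : 0 < G) (hρ : 1 ≤ ρ) (hε : 0 < ε)
    (hη : η = Real.sqrt ε / (18 * G * ρ ^ 2)) (hα : α = 1 / (3 * ρ ^ 2))
    (g : ℕ → EuclideanSpace ℝ (Fin n)) (hg : ∀ t, ‖g t‖ ≤ G)
    (r : ℕ → ℝ) (hr : ∀ t, r t = Real.sqrt ε + η * G)
    (x p xstar : ℕ → EuclideanSpace ℝ (Fin n))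
    (F : ℕ → EuclideanSpace ℝ (Fin n) → ℝ)
    (hF : ∀ t w, F t w = η * (∑ τ ∈ Finset.Icc 1 t, ⟪g τ, w⟫) + ‖w - x 1‖ ^ 2)
    (gradF : ℕ → EuclideanSpace ℝ (Fin n) → EuclideanSpace ℝ (Fin n))
    (hgradF : ∀ t w, gradF t w = η • (∑ τ ∈ Finset.Icc 1 t, g τ) + (2:ℝ) • (w - x 1))
    (hx1 : x 1 ∈ P) (hxstar1 : xstar 1 = x 1)
    -- `xstar (t+1)` minimizes `F t` over `P`:
    (hxstarP : ∀ t : ℕ, 1 ≤ t → xstar (t + 1) ∈ P)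
    (hxstarmin : ∀ t : ℕ, 1 ≤ t → ∀ y ∈ P, F t (xstar (t + 1)) ≤ F t y)
    -- the local linear oracle guarantees at each step:
    (hpP : ∀ t : ℕ, 1 ≤ t → p t ∈ P)
    (hllo1 : ∀ t : ℕ, 1 ≤ t → ∀ y ∈ P, ‖x t - y‖ ≤ r t →
      ⟪gradF t (x t), p t⟫ ≤ ⟪gradF t (x t), y⟫)
    (hllo2 : ∀ t : ℕ, 1 ≤ t → ‖x t - p t‖ ≤ ρ * r t)
    (hupd : ∀ t : ℕ, 1 ≤ t → x (t + 1) = x t + α • (p t - x t)) :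
    ∀ t : ℕ, 1 ≤ t → t ≤ T →
      F (t - 1) (x t) - F (t - 1) (xstar t) ≤ ε ∧ ‖x t - xstar t‖ ≤ Real.sqrt ε := by
  -- basic positivity facts
  have hρ0 : (0:ℝ) < ρ := lt_of_lt_of_le one_pos hρ
  have hρ2 : (1:ℝ) ≤ ρ^2 := by nlinarith
  have hsε : 0 < Real.sqrt ε := Real.sqrt_pos.mpr hε
  have hη0 : 0 < η := by rw [hη]; positivity
  have hηG : η * G = Real.sqrt ε / (18 * ρ^2) := by rw [hη]; field_simp
  have hηG0 : 0 < η * G := by rw [hηG]; positivity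
  have hα0 : 0 < α := by rw [hα]; positivity
  have hα1 : α ≤ 1 := by
    rw [hα, div_le_one (by positivity)]; nlinarith
  have hrpos : ∀ t, 0 < r t := by intro t; rw [hr]; linarith
  -- quadratic expansion of F
  have hquad : ∀ (t:ℕ) (w d : EuclideanSpace ℝ (Fin n)),
      F t (w + d) = F t w + ⟪gradF t w, d⟫ + ‖d‖^2 := by
    intro t w d
    have h2 : ⟪gradF t w, d⟫ = η * (∑ τ ∈ Finset.Icc 1 t, ⟪g τ, d⟫) + 2 * ⟪w - x 1, d⟫ := by
      rw [hgradF, inner_add_left, real_inner_smul_left, real_inner_smul_left, sum_inner]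
    have h3 : ‖w + d - x 1‖^2 = ‖w - x 1‖^2 + 2*⟪w - x 1, d⟫ + ‖d‖^2 := by
      rw [show w + d - x 1 = (w - x 1) + d by abel, norm_add_sq_real]
    rw [hF, hF, h3, h2]
    simp only [inner_add_right, Finset.sum_add_distrib]
    ring
  -- one-step relation between successive objectives
  have hstep : ∀ (t:ℕ) (w : EuclideanSpace ℝ (Fin n)),
      F (t+1) w = F t w + η * ⟪g (t+1), w⟫ := by
    intro t w
    rw [hF, hF, Finset.sum_Icc_succ_top (Nat.one_le_iff_ne_zero.mpr (Nat.succ_ne_zero t))]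
    ring
  -- variational principle: minimizers over `P` satisfy a strong optimality inequality
  have hvar : ∀ (t:ℕ) (z : EuclideanSpace ℝ (Fin n)), z ∈ P → (∀ y ∈ P, F t z ≤ F t y) →
      ∀ y ∈ P, F t z + ‖y - z‖^2 ≤ F t y := by
    intro t z hz hmin y hy
    set gd := gradF t z with hgd
    set d := y - z with hd
    have hyd : z + d = y := by rw [hd]; abel
    have hkey : ∀ l : ℝ, 0 < l → l ≤ 1 → 0 ≤ l * ⟪gd, d⟫ + l^2 * ‖d‖^2 := by
      intro l hl0 hl1
      have hmem : z + l • d ∈ P := by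
        have h := hP hz hy (by linarith : (0:ℝ) ≤ 1 - l) hl0.le (by ring)
        have heq : (1-l) • z + l • y = z + l • d := by rw [hd, smul_sub, sub_smul, one_smul]; abel
        rwa [heq] at h
      have h1 := hmin _ hmem
      have h2 := hquad t z (l • d)
      rw [real_inner_smul_right] at h2
      have h3 : ‖l • d‖^2 = l^2 * ‖d‖^2 := by
        rw [norm_smul, mul_pow, Real.norm_eq_abs, sq_abs]
      rw [h3] at h2
      linarith
    have hinner : 0 ≤ ⟪gd, d⟫ := by
      by_contra hneg
      push_neg at hneg
      by_cases hd0 : ‖d‖^2 = 0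
      · have := hkey 1 one_pos le_rfl
        rw [hd0] at this; linarith
      · have hd0' : 0 < ‖d‖^2 := lt_of_le_of_ne (by positivity) (Ne.symm hd0)
        set a := ⟪gd, d⟫
        set l := min 1 (-a/(2*‖d‖^2)) with hl
        have hl0 : 0 < l := lt_min one_pos (div_pos (by linarith) (by positivity))
        have hl1 : l ≤ 1 := min_le_left _ _
        have h2 : l ≤ -a/(2*‖d‖^2) := min_le_right _ _
        have h3 : l * (2*‖d‖^2) ≤ -a := by
          rw [← le_div_iff₀ (by positivity)]; exact h2
        have h4 := hkey l hl0 hl1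
        nlinarith
    have h5 := hquad t z d
    rw [hyd] at h5
    linarith
  -- the main induction
  have main : ∀ t : ℕ, 1 ≤ t →
      x t ∈ P ∧ xstar t ∈ P ∧
      (∀ y ∈ P, F (t-1) (xstar t) + ‖y - xstar t‖^2 ≤ F (t-1) y) ∧
      F (t-1) (x t) - F (t-1) (xstar t) ≤ ε := by
    intro t ht
    induction t, ht using Nat.le_induction with
    | base =>
      have hF0 : ∀ w, F 0 w = ‖w - x 1‖^2 := by
        intro w; rw [hF]; simp
      refine ⟨hx1, hxstar1 ▸ hx1, ?_, ?_⟩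
      · intro y hy
        rw [hxstar1]
        simp only [Nat.sub_self, hF0]
        simp [sub_self]
      · rw [hxstar1]; simp only [Nat.sub_self, hF0]; simp [sub_self]; positivity
    | succ t ht IH =>
      obtain ⟨hxP, hxsP, hsmin, hgap⟩ := IH
      obtain ⟨m, rfl⟩ : ∃ m, t = m + 1 := ⟨t-1, (Nat.succ_pred_eq_of_pos ht).symm⟩
      simp only [Nat.add_sub_cancel] at hsmin hgap ⊢
      have hs1P : xstar (m+1+1) ∈ P := hxstarP (m+1) ht
      have hsmin' : ∀ y ∈ P, F (m+1) (xstar (m+1+1)) + ‖y - xstar (m+1+1)‖^2 ≤ F (m+1) y :=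
        hvar (m+1) _ hs1P (hxstarmin (m+1) ht)
      -- displacement of minimizers
      have hdisp : ‖xstar (m+1+1) - xstar (m+1)‖ ≤ η * G := by
        have h1 := hsmin _ hs1P
        have h2 := hxstarmin (m+1) ht _ hxsP
        rw [hstep, hstep] at h2
        have hcs : ⟪g (m+1), xstar (m+1)⟫ - ⟪g (m+1), xstar (m+1+1)⟫
            ≤ G * ‖xstar (m+1+1) - xstar (m+1)‖ := by
          rw [← inner_sub_right]
          calc ⟪g (m+1), xstar (m+1) - xstar (m+1+1)⟫
              ≤ ‖g (m+1)‖ * ‖xstar (m+1) - xstar (m+1+1)‖ := real_inner_le_norm _ _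
            _ ≤ G * ‖xstar (m+1+1) - xstar (m+1)‖ := by
                rw [norm_sub_rev]
                exact mul_le_mul_of_nonneg_right (hg _) (norm_nonneg _)
        have hmul := mul_le_mul_of_nonneg_left hcs hη0.le
        nlinarith [norm_nonneg (xstar (m+1+1) - xstar (m+1)), hηG0]
      -- distance of iterate to current minimizer
      have hxxs : ‖x (m+1) - xstar (m+1)‖ ≤ Real.sqrt ε := by
        have h := hsmin _ hxP
        have h2 : ‖x (m+1) - xstar (m+1)‖^2 ≤ ε := by linarith
        calc ‖x (m+1) - xstar (m+1)‖
            = Real.sqrt (‖x (m+1) - xstar (m+1)‖^2) := (Real.sqrt_sq (norm_nonneg _)).symm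
          _ ≤ Real.sqrt ε := Real.sqrt_le_sqrt h2
      -- the new minimizer is within the oracle radius
      have hrad : ‖x (m+1) - xstar (m+1+1)‖ ≤ r (m+1) := by
        rw [hr]
        calc ‖x (m+1) - xstar (m+1+1)‖
            ≤ ‖x (m+1) - xstar (m+1)‖ + ‖xstar (m+1) - xstar (m+1+1)‖ :=
              norm_sub_le_norm_sub_add_norm_sub _ _ _
          _ ≤ Real.sqrt ε + η * G := add_le_add hxxs (by rw [norm_sub_rev]; exact hdisp)
      have horacle := hllo1 (m+1) ht _ hs1P hrad
      have hup := hupd (m+1) ht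
      -- quadratic expansion along the update
      have e1 : F (m+1) (x (m+1+1)) = F (m+1) (x (m+1))
          + α * ⟪gradF (m+1) (x (m+1)), p (m+1) - x (m+1)⟫
          + α^2 * ‖p (m+1) - x (m+1)‖^2 := by
        have hsm : ‖α • (p (m+1) - x (m+1))‖^2 = α^2 * ‖p (m+1) - x (m+1)‖^2 := by
          rw [norm_smul, mul_pow, Real.norm_eq_abs, sq_abs]
        rw [hup, hquad, real_inner_smul_right, hsm]
      -- convexity bound via the quadratic identity
      have e2 : ⟪gradF (m+1) (x (m+1)), xstar (m+1+1) - x (m+1)⟫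
          ≤ F (m+1) (xstar (m+1+1)) - F (m+1) (x (m+1)) := by
        have h := hquad (m+1) (x (m+1)) (xstar (m+1+1) - x (m+1))
        rw [show x (m+1) + (xstar (m+1+1) - x (m+1)) = xstar (m+1+1) by abel] at h
        linarith [sq_nonneg ‖xstar (m+1+1) - x (m+1)‖]
      have e3 : ⟪gradF (m+1) (x (m+1)), p (m+1) - x (m+1)⟫
          ≤ F (m+1) (xstar (m+1+1)) - F (m+1) (x (m+1)) := by
        rw [inner_sub_right]
        rw [inner_sub_right] at e2
        linarith
      have e4 : ‖p (m+1) - x (m+1)‖ ≤ ρ * r (m+1) := by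
        rw [norm_sub_rev]; exact hllo2 (m+1) ht
      have e4' : ‖p (m+1) - x (m+1)‖^2 ≤ ρ^2 * (r (m+1))^2 := by
        rw [← mul_pow]
        exact pow_le_pow_left₀ (norm_nonneg _) e4 2
      -- bound on the gap at the old iterate w.r.t. the new objective
      have e5 : F (m+1) (x (m+1)) - F (m+1) (xstar (m+1+1)) ≤ ε + η * G * r (m+1) := by
        rw [hstep, hstep]
        have hA : F m (x (m+1)) - F m (xstar (m+1+1)) ≤ ε := by
          have h1 := hsmin _ hs1P
          linarith [sq_nonneg ‖xstar (m+1+1) - xstar (m+1)‖]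
        have hc : ⟪g (m+1), x (m+1)⟫ - ⟪g (m+1), xstar (m+1+1)⟫ ≤ G * r (m+1) := by
          rw [← inner_sub_right]
          calc ⟪g (m+1), x (m+1) - xstar (m+1+1)⟫
              ≤ ‖g (m+1)‖ * ‖x (m+1) - xstar (m+1+1)‖ := real_inner_le_norm _ _
            _ ≤ G * r (m+1) := mul_le_mul (hg _) hrad (norm_nonneg _) hG.le
        have hmul := mul_le_mul_of_nonneg_left hc hη0.le
        linarith [hA, hmul]
      -- contraction step
      have e6 : F (m+1) (x (m+1+1)) - F (m+1) (xstar (m+1+1))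
          ≤ (1-α)*(ε + η*G*r (m+1)) + α^2*ρ^2*(r (m+1))^2 := by
        have p1 := mul_le_mul_of_nonneg_left e3 hα0.le
        have p2 := mul_le_mul_of_nonneg_left e5 (by linarith : (0:ℝ) ≤ 1 - α)
        have p3 := mul_le_mul_of_nonneg_left e4' (sq_nonneg α)
        linarith [e1, p1, p2, p3]
      -- numerical bound
      have e7 : (1-α)*(ε + η*G*r (m+1)) + α^2*ρ^2*(r (m+1))^2 ≤ ε := by
        have hsq : (Real.sqrt ε)^2 = ε := Real.sq_sqrt hε.le
        have := ocg_arith_aux (ρ^2) (Real.sqrt ε) hρ2 hsε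
        rw [hsq] at this
        rw [hα, hr, hηG]
        linarith [this]
      -- membership of the new iterate
      have hxP' : x (m+1+1) ∈ P := by
        have hcomb := hP hxP (hpP (m+1) ht) (by linarith : (0:ℝ) ≤ 1 - α) hα0.le (by ring)
        have heq : (1-α) • x (m+1) + α • p (m+1) = x (m+1) + α • (p (m+1) - x (m+1)) := by
          rw [smul_sub, sub_smul, one_smul]; abel
        rw [hup]
        rwa [heq] at hcomb
      exact ⟨hxP', hs1P, hsmin', by linarith⟩
  -- conclude
  intro t ht _
  obtain ⟨hxP, hxsP, hsmin, hgap⟩ := main t ht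
  refine ⟨hgap, ?_⟩
  have h := hsmin _ hxP
  have h2 : ‖x t - xstar t‖^2 ≤ ε := by linarith
  calc ‖x t - xstar t‖ = Real.sqrt (‖x t - xstar t‖^2) := (Real.sqrt_sq (norm_nonneg _)).symm
    _ ≤ Real.sqrt ε := Real.sqrt_le_sqrt h2
end

section
/- For f(x) = ‖x - 1⃗‖² - n + 2 on the n-dimensional simplex Δₙ: min over t-sparse points x ∈ Δₙ of f(x) equals 1/t, achieved by the uniform vector on t coordinates, while min_{x∈Δₙ} f(x) = 1/n achieved at x = (1/n)1⃗. Consequently, if x_t ∈ Δₙ satisfies f(x_t) ≤ min_{Δₙ} f + 1/t - 1/n, then ‖x_t‖₀ ≥ t. -/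
open Classical

private lemma card_lt_filter (n t : ℕ) (htn : t ≤ n) :
    (Finset.univ.filter fun i : Fin n => (i : ℕ) < t).card = t := by
  have : (Finset.univ.filter fun i : Fin n => (i : ℕ) < t)
      = Finset.map (Fin.castLEEmb htn) Finset.univ := by
    ext i
    simp only [Finset.mem_filter, Finset.mem_univ, true_and, Finset.mem_map,
      Fin.castLEEmb_apply]
    constructor
    · intro h; exact ⟨⟨i, h⟩, rfl⟩
    · rintro ⟨j, rfl⟩; exact j.isLt
  rw [this, Finset.card_map, Finset.card_univ, Fintype.card_fin]

private lemma key_aux (n : ℕ) (x : Fin n → ℝ) (hx1 : ∑ i, x i = 1) :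
    ((Finset.univ.filter fun i => x i ≠ 0).card : ℝ)⁻¹ ≤ ∑ i, x i ^ 2 := by
  set s := Finset.univ.filter fun i => x i ≠ 0 with hs
  have hsum : ∑ i ∈ s, x i = 1 := by
    rw [← hx1, hs]
    exact Finset.sum_filter_ne_zero _
  have hsq : ∑ i ∈ s, x i ^ 2 = ∑ i, x i ^ 2 := by
    apply Finset.sum_subset (Finset.subset_univ s)
    intro i _ hi
    simp only [hs, Finset.mem_filter, Finset.mem_univ, true_and, not_not] at hi
    simp [hi]
  have h1 : (1 : ℝ) ≤ s.card * ∑ i, x i ^ 2 := by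
    have := sq_sum_le_card_mul_sum_sq (s := s) (f := x)
    rw [hsum, hsq] at this
    simpa using this
  have hcard : 0 < s.card := by
    by_contra h
    push_neg at h
    interval_cases h' : s.card
    · have : s = ∅ := Finset.card_eq_zero.mp h'
      rw [this] at hsum; simp at hsum
  have hc : (0 : ℝ) < s.card := by exact_mod_cast hcard
  rw [inv_le_iff_one_le_mul₀ hc]
  linarith [h1]

private lemma f_eq (n : ℕ) (x : Fin n → ℝ) (hx1 : ∑ i, x i = 1) :
    (∑ i, (x i - 1) ^ 2) - n + 2 = ∑ i, x i ^ 2 := by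
  have : ∑ i, (x i - 1) ^ 2 = (∑ i, x i ^ 2) - 2 * (∑ i, x i) + n := by
    rw [Finset.mul_sum, ← Finset.sum_sub_distrib]
    have : (n : ℝ) = ∑ _i : Fin n, (1 : ℝ) := by simp
    rw [this, ← Finset.sum_add_distrib]
    apply Finset.sum_congr rfl
    intro i _; ring
  rw [this, hx1]; ring

open Classical in
/-- Sparsity lower bound for approximate minimizers over the simplex: for
`f x = Σᵢ (xᵢ - 1)² - n + 2` on `Δₙ`, the minimum over `t`-sparse points equals `1/t`
(achieved by the uniform vector on `t` coordinates), the global minimum is `1/n`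
(achieved at the uniform vector), and consequently any `x ∈ Δₙ` with
`f x ≤ min f + 1/t - 1/n` satisfies `‖x‖₀ ≥ t`. -/
theorem stmt_18 (n t : ℕ) (ht : 1 ≤ t) (htn : t ≤ n)
    (simplex : Set (Fin n → ℝ))
    (hsimplex : simplex = {x : Fin n → ℝ | (∀ i, 0 ≤ x i) ∧ ∑ i, x i = 1})
    (f : (Fin n → ℝ) → ℝ)
    (hf : ∀ x, f x = (∑ i, (x i - 1) ^ 2) - n + 2)
    (xt : Fin n → ℝ) (hxt : ∀ i : Fin n, xt i = if (i : ℕ) < t then (t : ℝ)⁻¹ else 0)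
    (xunif : Fin n → ℝ) (hxunif : ∀ i : Fin n, xunif i = (n : ℝ)⁻¹) :
    (∀ x ∈ simplex, (Finset.univ.filter fun i => x i ≠ 0).card ≤ t → (t : ℝ)⁻¹ ≤ f x) ∧
    (xt ∈ simplex ∧ f xt = (t : ℝ)⁻¹) ∧
    (∀ x ∈ simplex, (n : ℝ)⁻¹ ≤ f x) ∧
    (xunif ∈ simplex ∧ f xunif = (n : ℝ)⁻¹) ∧
    (∀ x ∈ simplex, f x ≤ (n : ℝ)⁻¹ + (t : ℝ)⁻¹ - (n : ℝ)⁻¹ →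
      t ≤ (Finset.univ.filter fun i => x i ≠ 0).card) := by
  subst hsimplex
  have hn : 1 ≤ n := le_trans ht htn
  have htR : (0 : ℝ) < t := by exact_mod_cast ht
  have hnR : (0 : ℝ) < n := by exact_mod_cast hn
  have hfx : ∀ x : Fin n → ℝ, (∑ i, x i = 1) → f x = ∑ i, x i ^ 2 := by
    intro x hx1; rw [hf]; exact f_eq n x hx1
  -- xt facts
  have hxtsum : ∑ i, xt i = 1 := by
    have : ∑ i, xt i = ∑ i ∈ Finset.univ.filter fun i : Fin n => (i : ℕ) < t, (t : ℝ)⁻¹ := by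
      rw [Finset.sum_filter]
      exact Finset.sum_congr rfl fun i _ => hxt i
    rw [this, Finset.sum_const, card_lt_filter n t htn, nsmul_eq_mul]
    field_simp
  have hxtmem : (∀ i, 0 ≤ xt i) ∧ ∑ i, xt i = 1 := by
    refine ⟨fun i => ?_, hxtsum⟩
    rw [hxt i]; positivity
  have hfxt : f xt = (t : ℝ)⁻¹ := by
    rw [hfx xt hxtsum]
    have : ∑ i, xt i ^ 2
        = ∑ i ∈ Finset.univ.filter fun i : Fin n => (i : ℕ) < t, ((t : ℝ)⁻¹) ^ 2 := by
      rw [Finset.sum_filter]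
      apply Finset.sum_congr rfl
      intro i _
      rw [hxt i]
      split <;> simp
    rw [this, Finset.sum_const, card_lt_filter n t htn, nsmul_eq_mul]
    field_simp
  -- xunif facts
  have hxusum : ∑ i, xunif i = 1 := by
    simp only [hxunif]
    rw [Finset.sum_const, Finset.card_univ, Fintype.card_fin, nsmul_eq_mul]
    field_simp
  have hfxu : f xunif = (n : ℝ)⁻¹ := by
    rw [hfx xunif hxusum]
    simp only [hxunif]
    rw [Finset.sum_const, Finset.card_univ, Fintype.card_fin, nsmul_eq_mul]
    field_simp
  refine ⟨?_, ⟨⟨fun i => by rw [hxt i]; positivity, hxtsum⟩, hfxt⟩,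
    ?_, ⟨⟨fun i => by rw [hxunif i]; positivity, hxusum⟩, hfxu⟩, ?_⟩
  · rintro x ⟨hx0, hx1⟩ hcard
    rw [hfx x hx1]
    refine le_trans ?_ (key_aux n x hx1)
    apply inv_anti₀
    · have : 0 < (Finset.univ.filter fun i => x i ≠ 0).card := by
        by_contra h
        push_neg at h
        have hz : (Finset.univ.filter fun i => x i ≠ 0) = ∅ :=
          Finset.card_eq_zero.mp (Nat.le_zero.mp h)
        have : ∑ i ∈ Finset.univ.filter fun i => x i ≠ 0, x i = 1 := by
          rw [← hx1]; exact Finset.sum_filter_ne_zero _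
        rw [hz] at this; simp at this
      exact_mod_cast this
    · exact_mod_cast hcard
  · rintro x ⟨hx0, hx1⟩
    rw [hfx x hx1]
    refine le_trans ?_ (key_aux n x hx1)
    apply inv_anti₀
    · have : 0 < (Finset.univ.filter fun i => x i ≠ 0).card := by
        by_contra h
        push_neg at h
        have hz : (Finset.univ.filter fun i => x i ≠ 0) = ∅ :=
          Finset.card_eq_zero.mp (Nat.le_zero.mp h)
        have : ∑ i ∈ Finset.univ.filter fun i => x i ≠ 0, x i = 1 := by
          rw [← hx1]; exact Finset.sum_filter_ne_zero _
        rw [hz] at this; simp at this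
      exact_mod_cast this
    · exact_mod_cast (Finset.card_filter_le _ _).trans (by simp)
  · rintro x ⟨hx0, hx1⟩ hle
    have h1 : ((Finset.univ.filter fun i => x i ≠ 0).card : ℝ)⁻¹ ≤ (t : ℝ)⁻¹ := by
      have := key_aux n x hx1
      rw [← hfx x hx1] at this
      linarith
    have hc : 0 < (Finset.univ.filter fun i => x i ≠ 0).card := by
      by_contra h
      push_neg at h
      have hz : (Finset.univ.filter fun i => x i ≠ 0) = ∅ :=
        Finset.card_eq_zero.mp (Nat.le_zero.mp h)
      have : ∑ i ∈ Finset.univ.filter fun i => x i ≠ 0, x i = 1 := by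
        rw [← hx1]; exact Finset.sum_filter_ne_zero _
      rw [hz] at this; simp at this
    have hcR : (0 : ℝ) < (Finset.univ.filter fun i => x i ≠ 0).card := by exact_mod_cast hc
    have := (inv_le_inv₀ hcR htR).mp h1
    exact_mod_cast this
end

section
/- The solution to min{Σᵢ(xᵢ - 1)² : x ∈ Δₙ, ‖x‖₀ ≤ t} is x̃ with x̃ᵢ = 1/t for i ≤ t and 0 otherwise, with optimal value n - 2 + 1/t. -/
open Classical in
/-- The sparse minimization problem `min { Σᵢ (xᵢ - 1)² : x ∈ Δₙ, ‖x‖₀ ≤ t }` is solved by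
`x̃` with `x̃ᵢ = 1/t` for `i < t` and `0` otherwise, with optimal value `n - 2 + 1/t`. -/
theorem stmt_19 (n t : ℕ) (ht : 1 ≤ t) (htn : t ≤ n)
    (simplex : Set (Fin n → ℝ))
    (hsimplex : simplex = {x : Fin n → ℝ | (∀ i, 0 ≤ x i) ∧ ∑ i, x i = 1})
    (xt : Fin n → ℝ) (hxt : ∀ i : Fin n, xt i = if (i : ℕ) < t then (t : ℝ)⁻¹ else 0) :
    xt ∈ simplex ∧
    (Finset.univ.filter fun i => xt i ≠ 0).card ≤ t ∧
    ∑ i, (xt i - 1) ^ 2 = (n : ℝ) - 2 + (t : ℝ)⁻¹ ∧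
    ∀ x ∈ simplex, (Finset.univ.filter fun i => x i ≠ 0).card ≤ t →
      (n : ℝ) - 2 + (t : ℝ)⁻¹ ≤ ∑ i, (x i - 1) ^ 2 := by
  have htR : (0:ℝ) < t := by exact_mod_cast ht
  have hcard : (Finset.univ.filter fun i : Fin n => (i : ℕ) < t).card = t := by
    rw [Finset.card_filter, Fin.sum_univ_eq_sum_range (fun i => if i < t then (1:ℕ) else 0)]
    calc ∑ i ∈ Finset.range n, (if i < t then (1:ℕ) else 0)
        = ∑ i ∈ Finset.range n, if i ∈ Finset.range t then (1:ℕ) else 0 := by simp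
      _ = t := by
          rw [Finset.sum_ite_mem, Finset.inter_eq_right.mpr (Finset.range_subset_range.mpr htn)]
          simp
  -- expansion lemma
  have hexp : ∀ x : Fin n → ℝ,
      ∑ i, (x i - 1) ^ 2 = ∑ i, (x i)^2 - 2 * ∑ i, x i + n := by
    intro x
    have h : ∀ i : Fin n, (x i - 1)^2 = (x i)^2 - 2 * (x i) + 1 := fun i => by ring
    simp [h, Finset.sum_add_distrib, Finset.sum_sub_distrib, Finset.mul_sum]
  have hsum_xt : ∑ i, xt i = 1 := by
    rw [Finset.sum_congr rfl (fun i _ => hxt i), ← Finset.sum_filter, Finset.sum_const,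
      hcard]
    field_simp
    rw [nsmul_eq_mul, one_div, mul_inv_cancel₀ htR.ne']
  have hsupp : (Finset.univ.filter fun i => xt i ≠ 0)
      = Finset.univ.filter fun i : Fin n => (i : ℕ) < t := by
    ext i
    simp only [Finset.mem_filter, Finset.mem_univ, true_and, hxt i]
    split_ifs with h <;> simp [h, inv_ne_zero htR.ne']
  have hxtsq : ∑ i, (xt i)^2 = (t:ℝ)⁻¹ := by
    have h : ∀ i : Fin n, (xt i)^2 = if (i : ℕ) < t then ((t:ℝ)⁻¹)^2 else 0 := by
      intro i; rw [hxt i]; split_ifs <;> simp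
    rw [Finset.sum_congr rfl (fun i _ => h i), ← Finset.sum_filter, Finset.sum_const, hcard]
    field_simp
    rw [nsmul_eq_mul, one_div, ← mul_assoc, ← sq, mul_inv_cancel₀ (pow_ne_zero 2 htR.ne')]
  refine ⟨?_, ?_, ?_, ?_⟩
  · rw [hsimplex]
    refine ⟨fun i => ?_, hsum_xt⟩
    rw [hxt i]; split_ifs <;> positivity
  · rw [hsupp, hcard]
  · rw [hexp, hxtsq, hsum_xt]; ring
  · intro x hx hcardx
    rw [hsimplex] at hx
    obtain ⟨hx0, hx1⟩ := hx
    set s := Finset.univ.filter fun i => x i ≠ 0 with hs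
    have hsum_s : ∑ i ∈ s, x i = 1 := by
      rw [hs, Finset.sum_filter_ne_zero, hx1]
    have h1 : (1:ℝ) ≤ (s.card : ℝ) * ∑ i ∈ s, (x i)^2 := by
      have := sq_sum_le_card_mul_sum_sq (s := s) (f := x)
      rwa [hsum_s, one_pow] at this
    have h2 : ∑ i ∈ s, (x i)^2 ≤ ∑ i, (x i)^2 :=
      Finset.sum_le_sum_of_subset_of_nonneg (Finset.filter_subset _ _)
        (fun i _ _ => sq_nonneg _)
    have h3 : (1:ℝ) ≤ (t:ℝ) * ∑ i, (x i)^2 := by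
      calc (1:ℝ) ≤ (s.card : ℝ) * ∑ i ∈ s, (x i)^2 := h1
        _ ≤ (t:ℝ) * ∑ i, (x i)^2 := by
            apply mul_le_mul (by exact_mod_cast hcardx) h2
              (Finset.sum_nonneg fun i _ => sq_nonneg _) (by positivity)
    have h4 : (t:ℝ)⁻¹ ≤ ∑ i, (x i)^2 := by
      rw [inv_le_iff_one_le_mul₀ htR]
      linarith [h3]
    rw [hexp, hx1]
    linarith
end
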